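/- Let φ : E(𝒜) → E(ℬ) be a sequential isomorphism between effect sets of von Neumann algebras and P ∈ 𝒜 a projection. Then P is an abelian projection (P E(𝒜) P is a commutative set) if and only if φ(P) is an abelian projection in ℬ. -/

import Mathlib

set_option synthInstance.maxHeartbeats 1000000
set_option maxHeartbeats 1000000

section AuxCStar

variable {A : Type*} [CStarAlgebra A] [PartialOrder A] [StarOrderedRing A]

set_option linter.unusedSectionVars false in
private lemma my_commute_cfc_complex (x a : A) [ha : IsStarNormal a] (f : ℂ → ℂ)
    (h1 : x * a = a * x) (h2 : star x * a = a * star x) :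
    x * cfc f a = cfc f a * x := by
  have hclosed : IsClosed (StarSubalgebra.centralizer ℂ ({x} : Set A) : Set A) := by
    rw [StarSubalgebra.coe_centralizer]
    have : (({x} : Set A) ∪ star {x}).centralizer =
        {z | x * z = z * x} ∩ {z | star x * z = z * star x} := by
      ext z
      simp [Set.mem_centralizer_iff, Set.star_singleton]
      aesop
    rw [this]
    exact (isClosed_eq (continuous_mul_left x) (continuous_mul_right x)).inter
      (isClosed_eq (continuous_mul_left (star x)) (continuous_mul_right (star x)))
  have hamem : a ∈ StarSubalgebra.centralizer ℂ ({x} : Set A) := by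
    rw [StarSubalgebra.mem_centralizer_iff (R := ℂ)]
    rintro g rfl
    exact ⟨h1, h2⟩
  have hmem : cfc f a ∈ StarAlgebra.elemental ℂ a := by
    refine cfc_cases (· ∈ StarAlgebra.elemental ℂ a) a f (zero_mem _) fun hf hna ↦ ?_
    rw [cfcHom_eq_of_isStarNormal]
    exact SetLike.coe_mem _
  have hle := StarAlgebra.elemental.le_of_mem hclosed hamem
  have := (StarSubalgebra.mem_centralizer_iff (R := ℂ)).mp (hle hmem) x rfl
  exact this.1

private lemma my_commute_sqrt {x a : A} (ha : 0 ≤ a) (h : x * a = a * x) :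
    x * CFC.sqrt a = CFC.sqrt a * x := by
  have hsa : IsSelfAdjoint a := IsSelfAdjoint.of_nonneg ha
  have : IsStarNormal a := hsa.isStarNormal
  have h2 : star x * a = a * star x := by
    have := congrArg star h
    simpa [star_mul, hsa.star_eq] using this.symm
  rw [CFC.sqrt_eq_cfc, cfc_nnreal_eq_real _ _ ha, cfc_real_eq_complex _ hsa]
  exact my_commute_cfc_complex x a _ h h2

private lemma my_seq_comm_of_commute {a b : A} (ha : 0 ≤ a) (hb : 0 ≤ b) (h : a * b = b * a) :
    CFC.sqrt a * b * CFC.sqrt a = CFC.sqrt b * a * CFC.sqrt b := by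
  have h1 : b * CFC.sqrt a = CFC.sqrt a * b := my_commute_sqrt ha (by rw [h])
  have h2 : a * CFC.sqrt b = CFC.sqrt b * a := my_commute_sqrt hb (by rw [h])
  calc CFC.sqrt a * b * CFC.sqrt a = b * CFC.sqrt a * CFC.sqrt a := by rw [← h1]
    _ = b * a := by rw [mul_assoc, CFC.sqrt_mul_sqrt_self a ha]
    _ = a * b := h.symm
    _ = a * (CFC.sqrt b * CFC.sqrt b) := by rw [CFC.sqrt_mul_sqrt_self b hb]
    _ = CFC.sqrt b * a * CFC.sqrt b := by rw [← mul_assoc, h2]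

private lemma my_commute_of_seq_comm {a b : A} (ha : 0 ≤ a) (hb : 0 ≤ b)
    (h : CFC.sqrt a * b * CFC.sqrt a = CFC.sqrt b * a * CFC.sqrt b) :
    a * b = b * a := by
  set sa := CFC.sqrt a with hsa_def
  set sb := CFC.sqrt b with hsb_def
  have hsa0 : 0 ≤ sa := CFC.sqrt_nonneg _
  have hsb0 : 0 ≤ sb := CFC.sqrt_nonneg _
  have hsa_sa : IsSelfAdjoint sa := .of_nonneg hsa0
  have hsb_sa : IsSelfAdjoint sb := .of_nonneg hsb0
  set u := sa * sb with hu_def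
  have hstaru : star u = sb * sa := by
    rw [hu_def, star_mul, hsa_sa.star_eq, hsb_sa.star_eq]
  have hnormal : IsStarNormal u := by
    constructor
    rw [commute_iff_eq, hstaru]
    calc sb * sa * (sa * sb) = sb * (sa * sa) * sb := by noncomm_ring
      _ = sb * a * sb := by rw [CFC.sqrt_mul_sqrt_self a ha]
      _ = sa * b * sa := h.symm
      _ = sa * (sb * sb) * sa := by rw [CFC.sqrt_mul_sqrt_self b hb]
      _ = sa * sb * (sb * sa) := by noncomm_ring
  set v := CFC.sqrt sa with hv_def
  have hv0 : 0 ≤ v := CFC.sqrt_nonneg _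
  have hv_sa : IsSelfAdjoint v := .of_nonneg hv0
  have hvv : v * v = sa := CFC.sqrt_mul_sqrt_self sa hsa0
  have hw0 : 0 ≤ v * sb * v := by
    have := star_left_conjugate_nonneg hsb0 v
    rwa [hv_sa.star_eq] at this
  have hw_sa : IsSelfAdjoint (v * sb * v) := .of_nonneg hw0
  have hspec : spectrum ℂ u ⊆ Set.range (algebraMap ℝ ℂ) := by
    intro z hz
    rcases eq_or_ne z 0 with rfl | hz0
    · exact ⟨0, by simp⟩
    · have hu' : u = v * (v * sb) := by rw [hu_def, ← hvv, mul_assoc]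
      have hz' : z ∈ spectrum ℂ (v * sb * v) := by
        have := spectrum.nonzero_mul_comm (𝕜 := ℂ) v (v * sb)
        have hzmem : z ∈ spectrum ℂ (v * (v * sb)) \ {0} := ⟨hu' ▸ hz, hz0⟩
        have := this ▸ hzmem
        have h2 : (v * sb) * v = v * sb * v := by noncomm_ring
        exact h2 ▸ this.1
      obtain ⟨r, hr⟩ := hw_sa.spectrumRestricts.algebraMap_image.symm ▸ hz'
      exact ⟨r, hr.2⟩
  have hu_sa : IsSelfAdjoint u := by
    refine QuasispectrumRestricts.isSelfAdjoint u ?_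
    exact SpectrumRestricts.of_subset_range_algebraMap (f := ⇑Complex.reCLM)
      Complex.ofReal_re hspec
  have hcomm : sa * sb = sb * sa := by rw [← hstaru, hu_sa.star_eq]
  have hc : Commute sa sb := hcomm
  have c2 : Commute (sa * sa) (sb * sb) := (hc.mul_left hc).mul_right (hc.mul_left hc)
  rw [← CFC.sqrt_mul_sqrt_self a ha, ← CFC.sqrt_mul_sqrt_self b hb]
  exact c2

end AuxCStar

/-- The effects of a von Neumann algebra `M`: elements `a` of `M` with `0 ≤ a ≤ 1`
in the Loewner order. -/
def IsVNEffect {H : Type*} [NormedAddCommGroup H] [InnerProductSpace ℂ H] [CompleteSpace H]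
    (M : VonNeumannAlgebra H) (a : H →L[ℂ] H) : Prop :=
  a ∈ M ∧ 0 ≤ a ∧ a ≤ 1

section AuxVN

variable {H : Type*} [NormedAddCommGroup H] [InnerProductSpace ℂ H] [CompleteSpace H]

private lemma my_sqrt_mem (M : VonNeumannAlgebra H) {s : H →L[ℂ] H} (hs : s ∈ M) (h0 : 0 ≤ s) :
    CFC.sqrt s ∈ M := by
  rw [← SetLike.mem_coe, ← M.centralizer_centralizer]
  rw [Set.mem_centralizer_iff]
  intro z hz
  have hzs : z * s = s * z := ((Set.mem_centralizer_iff.mp hz) s (SetLike.mem_coe.mpr hs)).symm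
  exact my_commute_sqrt h0 hzs

private lemma my_seq_effect {M : VonNeumannAlgebra H} {s t : H →L[ℂ] H}
    (hs : IsVNEffect M s) (ht : IsVNEffect M t) :
    IsVNEffect M (CFC.sqrt s * t * CFC.sqrt s) := by
  obtain ⟨hsm, hs0, hs1⟩ := hs
  obtain ⟨htm, ht0, ht1⟩ := ht
  have hsq := my_sqrt_mem M hsm hs0
  have hsqsa : IsSelfAdjoint (CFC.sqrt s) := .of_nonneg (CFC.sqrt_nonneg _)
  refine ⟨mul_mem (mul_mem hsq htm) hsq, ?_, ?_⟩
  · have := star_left_conjugate_nonneg ht0 (CFC.sqrt s)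
    rwa [hsqsa.star_eq] at this
  · calc CFC.sqrt s * t * CFC.sqrt s ≤ CFC.sqrt s * 1 * CFC.sqrt s := by
          have := star_left_conjugate_le_conjugate ht1 (CFC.sqrt s)
          rwa [hsqsa.star_eq] at this
      _ = s := by rw [mul_one, CFC.sqrt_mul_sqrt_self s hs0]
      _ ≤ 1 := hs1

end AuxVN

/-- A sequential isomorphism preserves abelian projections in both directions:
a projection `P` has commutative compression `P E(M) P` iff `φ P` does. -/
theorem sequentialIso_preserves_abelian_projections
    {H K : Type*} [NormedAddCommGroup H] [InnerProductSpace ℂ H] [CompleteSpace H]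
    [NormedAddCommGroup K] [InnerProductSpace ℂ K] [CompleteSpace K]
    (M : VonNeumannAlgebra H) (N : VonNeumannAlgebra K)
    (φ : {a : H →L[ℂ] H // IsVNEffect M a} → {b : K →L[ℂ] K // IsVNEffect N b})
    (hbij : Function.Bijective φ)
    (hseq : ∀ (a b : {a : H →L[ℂ] H // IsVNEffect M a})
        (h : IsVNEffect M (CFC.sqrt (a : H →L[ℂ] H) * (b : H →L[ℂ] H) * CFC.sqrt (a : H →L[ℂ] H))),
      (φ ⟨CFC.sqrt (a : H →L[ℂ] H) * (b : H →L[ℂ] H) * CFC.sqrt (a : H →L[ℂ] H), h⟩ : K →L[ℂ] K)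
        = CFC.sqrt (φ a : K →L[ℂ] K) * (φ b : K →L[ℂ] K) * CFC.sqrt (φ a : K →L[ℂ] K))
    (P : {a : H →L[ℂ] H // IsVNEffect M a})
    (hPsa : IsSelfAdjoint (P : H →L[ℂ] H))
    (hP2 : (P : H →L[ℂ] H) * (P : H →L[ℂ] H) = P) :
    (∀ a b : {a : H →L[ℂ] H // IsVNEffect M a},
        ((P : H →L[ℂ] H) * a * P) * ((P : H →L[ℂ] H) * b * P)
          = ((P : H →L[ℂ] H) * b * P) * ((P : H →L[ℂ] H) * a * P)) ↔
    (∀ c d : {b : K →L[ℂ] K // IsVNEffect N b},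
        ((φ P : K →L[ℂ] K) * c * (φ P : K →L[ℂ] K)) * ((φ P : K →L[ℂ] K) * d * (φ P : K →L[ℂ] K))
          = ((φ P : K →L[ℂ] K) * d * (φ P : K →L[ℂ] K))
            * ((φ P : K →L[ℂ] K) * c * (φ P : K →L[ℂ] K))) := by
  have hP0 : (0 : H →L[ℂ] H) ≤ P := P.2.2.1
  have hQ0 : (0 : K →L[ℂ] K) ≤ (φ P : K →L[ℂ] K) := (φ P).2.2.1
  have sqrtP : CFC.sqrt (P : H →L[ℂ] H) = P := CFC.sqrt_unique hP2 hP0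
  have hPPP : (P : H →L[ℂ] H) * P * P = P := by rw [hP2, hP2]
  have heffP : IsVNEffect M (CFC.sqrt (P : H →L[ℂ] H) * (P : H →L[ℂ] H)
      * CFC.sqrt (P : H →L[ℂ] H)) := by
    rw [sqrtP, hPPP]; exact P.2
  have hsubP : (⟨CFC.sqrt (P : H →L[ℂ] H) * (P : H →L[ℂ] H) * CFC.sqrt (P : H →L[ℂ] H), heffP⟩
      : {a : H →L[ℂ] H // IsVNEffect M a}) = P := Subtype.ext (by
    show CFC.sqrt (P : H →L[ℂ] H) * (P : H →L[ℂ] H) * CFC.sqrt (P : H →L[ℂ] H) = (P : H →L[ℂ] H)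
    rw [sqrtP]; exact hPPP)
  have hQproj : (φ P : K →L[ℂ] K) * (φ P : K →L[ℂ] K) = (φ P : K →L[ℂ] K) := by
    have h := hseq P P heffP
    rw [hsubP] at h
    have hss := CFC.sqrt_mul_sqrt_self (φ P : K →L[ℂ] K) hQ0
    have h2 : CFC.sqrt (φ P : K →L[ℂ] K) * (φ P : K →L[ℂ] K) * CFC.sqrt (φ P : K →L[ℂ] K)
        = (φ P : K →L[ℂ] K) * (φ P : K →L[ℂ] K) := by
      calc CFC.sqrt (φ P : K →L[ℂ] K) * (φ P : K →L[ℂ] K) * CFC.sqrt (φ P : K →L[ℂ] K)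
          = CFC.sqrt (φ P : K →L[ℂ] K) * (CFC.sqrt (φ P : K →L[ℂ] K)
            * CFC.sqrt (φ P : K →L[ℂ] K)) * CFC.sqrt (φ P : K →L[ℂ] K) := by rw [hss]
        _ = (CFC.sqrt (φ P : K →L[ℂ] K) * CFC.sqrt (φ P : K →L[ℂ] K))
            * (CFC.sqrt (φ P : K →L[ℂ] K) * CFC.sqrt (φ P : K →L[ℂ] K)) := by noncomm_ring
        _ = (φ P : K →L[ℂ] K) * (φ P : K →L[ℂ] K) := by rw [hss]
    rw [← h2, ← h]
  have sqrtQ : CFC.sqrt (φ P : K →L[ℂ] K) = (φ P : K →L[ℂ] K) :=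
    CFC.sqrt_unique hQproj hQ0
  -- compressions are mapped to compressions
  have hcomp : ∀ a : {a : H →L[ℂ] H // IsVNEffect M a},
      ∃ hh : IsVNEffect M ((P : H →L[ℂ] H) * (a : H →L[ℂ] H) * (P : H →L[ℂ] H)),
        (φ ⟨(P : H →L[ℂ] H) * (a : H →L[ℂ] H) * (P : H →L[ℂ] H), hh⟩ : K →L[ℂ] K)
          = (φ P : K →L[ℂ] K) * (φ a : K →L[ℂ] K) * (φ P : K →L[ℂ] K) := by
    intro a
    have he0 := my_seq_effect P.2 a.2
    have he : IsVNEffect M ((P : H →L[ℂ] H) * (a : H →L[ℂ] H) * (P : H →L[ℂ] H)) := by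
      rw [← sqrtP]; exact he0
    refine ⟨he, ?_⟩
    have h := hseq P a he0
    have heq : (⟨CFC.sqrt (P : H →L[ℂ] H) * (a : H →L[ℂ] H) * CFC.sqrt (P : H →L[ℂ] H), he0⟩
        : {a : H →L[ℂ] H // IsVNEffect M a})
        = ⟨(P : H →L[ℂ] H) * (a : H →L[ℂ] H) * (P : H →L[ℂ] H), he⟩ :=
      Subtype.ext (by
        show CFC.sqrt (P : H →L[ℂ] H) * (a : H →L[ℂ] H) * CFC.sqrt (P : H →L[ℂ] H)
          = (P : H →L[ℂ] H) * (a : H →L[ℂ] H) * (P : H →L[ℂ] H)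
        rw [sqrtP])
    rw [heq, sqrtQ] at h
    exact h
  constructor
  · intro hM c d
    obtain ⟨a, rfl⟩ := hbij.2 c
    obtain ⟨b, rfl⟩ := hbij.2 d
    obtain ⟨ha', hφa⟩ := hcomp a
    obtain ⟨hb', hφb⟩ := hcomp b
    set s : {a : H →L[ℂ] H // IsVNEffect M a} := ⟨_, ha'⟩ with hs_def
    set t : {a : H →L[ℂ] H // IsVNEffect M a} := ⟨_, hb'⟩ with ht_def
    have hst : (s : H →L[ℂ] H) * (t : H →L[ℂ] H) = (t : H →L[ℂ] H) * (s : H →L[ℂ] H) := hM a b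
    have h1 := my_seq_comm_of_commute ha'.2.1 hb'.2.1 hst
    have hL := hseq s t (my_seq_effect s.2 t.2)
    have hR := hseq t s (my_seq_effect t.2 s.2)
    have heq : (⟨CFC.sqrt (s : H →L[ℂ] H) * (t : H →L[ℂ] H) * CFC.sqrt (s : H →L[ℂ] H),
          my_seq_effect s.2 t.2⟩ : {a : H →L[ℂ] H // IsVNEffect M a})
        = ⟨CFC.sqrt (t : H →L[ℂ] H) * (s : H →L[ℂ] H) * CFC.sqrt (t : H →L[ℂ] H),
          my_seq_effect t.2 s.2⟩ := Subtype.ext h1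
    have hseqQ : CFC.sqrt (φ s : K →L[ℂ] K) * (φ t : K →L[ℂ] K) * CFC.sqrt (φ s : K →L[ℂ] K)
        = CFC.sqrt (φ t : K →L[ℂ] K) * (φ s : K →L[ℂ] K) * CFC.sqrt (φ t : K →L[ℂ] K) := by
      rw [← hL, ← hR, heq]
    have hfin := my_commute_of_seq_comm (φ s).2.2.1 (φ t).2.2.1 hseqQ
    rw [← hφa, ← hφb]
    exact hfin
  · intro hN a b
    obtain ⟨ha', hφa⟩ := hcomp a
    obtain ⟨hb', hφb⟩ := hcomp b
    set s : {a : H →L[ℂ] H // IsVNEffect M a} := ⟨_, ha'⟩ with hs_def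
    set t : {a : H →L[ℂ] H // IsVNEffect M a} := ⟨_, hb'⟩ with ht_def
    have hc : (φ s : K →L[ℂ] K) * (φ t : K →L[ℂ] K)
        = (φ t : K →L[ℂ] K) * (φ s : K →L[ℂ] K) := by
      rw [hφa, hφb]
      exact hN (φ a) (φ b)
    have h1 := my_seq_comm_of_commute (φ s).2.2.1 (φ t).2.2.1 hc
    have hL := hseq s t (my_seq_effect s.2 t.2)
    have hR := hseq t s (my_seq_effect t.2 s.2)
    have hval : (φ (⟨CFC.sqrt (s : H →L[ℂ] H) * (t : H →L[ℂ] H) * CFC.sqrt (s : H →L[ℂ] H),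
          my_seq_effect s.2 t.2⟩ : {a : H →L[ℂ] H // IsVNEffect M a}) : K →L[ℂ] K)
        = (φ (⟨CFC.sqrt (t : H →L[ℂ] H) * (s : H →L[ℂ] H) * CFC.sqrt (t : H →L[ℂ] H),
          my_seq_effect t.2 s.2⟩ : {a : H →L[ℂ] H // IsVNEffect M a}) : K →L[ℂ] K) := by
      rw [hL, hR, h1]
    have harg := hbij.1 (Subtype.ext hval)
    have hvals := congrArg Subtype.val harg
    exact my_commute_of_seq_comm ha'.2.1 hb'.2.1 hvals
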